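/- Let (p_j)_{j≥1} be a sequence of distinct points of E such that for every n the Gram matrix A_n of p_1, …, p_n is positive definite, and suppose (p_j) is a uniqueness set in the sense that every g ∈ H satisfying ⟨g, h(p_j)⟩ = 0 for all j ≥ 1 also satisfies ⟨g, h(p)⟩ = 0 for all p ∈ E. Then for every f ∈ H, the Aveiro approximations f*_{A_n} converge in H, as n → ∞, to the orthogonal projection f* of f onto the closed linear span of {h(p) : p ∈ E}. -/
import Mathlib


open scoped ComplexInnerProductSpace ComplexOrder

/-- **Aveiro Method: convergence over a uniqueness set.**
Let `(p j)` be a sequence of distinct points of `E` whose Gram matrices `A n` (of the first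
`n` points) are all positive definite, and assume `(p j)` is a uniqueness set: any `g ∈ H`
with `⟨g, h (p j)⟩ = 0` for all `j` satisfies `⟨g, h q⟩ = 0` for all `q ∈ E`. Then for every
`f ∈ H` the Aveiro approximations `f*_{A n}` converge to the orthogonal projection `f*` of `f`
onto the closed linear span of `{h q : q ∈ E}` (characterized by: `f*` lies in the closure of
the span and `f − f*` is orthogonal to it). -/
theorem stmt3 {H : Type*} [NormedAddCommGroup H] [InnerProductSpace ℂ H] [CompleteSpace H]
    {E : Type*} (h : E → H) (p : ℕ → E) (hdist : Function.Injective p) (f : H)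
    (A : (n : ℕ) → Matrix (Fin n) (Fin n) ℂ)
    (hA : ∀ n (j k : Fin n), A n j k = ⟪h (p j), h (p k)⟫)
    (hpos : ∀ n, (A n).PosDef)
    (huniq : ∀ g : H, (∀ j : ℕ, ⟪h (p j), g⟫ = 0) → ∀ q : E, ⟪h q, g⟫ = 0)
    (fstar : H)
    (hmem : fstar ∈ (Submodule.span ℂ (Set.range h)).topologicalClosure)
    (horth : ∀ g ∈ (Submodule.span ℂ (Set.range h)).topologicalClosure, ⟪g, f - fstar⟫ = 0) :
    Filter.Tendsto
      (fun n : ℕ => ∑ j : Fin n, ∑ k : Fin n,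
        (⟪h (p j), f⟫ * (starRingEnd ℂ) ((A n)⁻¹ j k)) • h (p k))
      Filter.atTop (nhds fstar) := by
  classical
  set W := Submodule.span ℂ (Set.range h) with hWdef
  set S := W.topologicalClosure with hSdef
  set u : ℕ → H := fun n => ∑ j : Fin n, ∑ k : Fin n,
      (⟪h (p j), f⟫ * (starRingEnd ℂ) ((A n)⁻¹ j k)) • h (p k) with hu
  set V : ℕ → Submodule ℂ H :=
      fun n => Submodule.span ℂ (Set.range fun i : Fin n => h (p i)) with hV
  -- Key orthogonality: for every generator of `V n`, `⟪h (p i), f - u n⟫ = 0`.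
  have key : ∀ n (i : Fin n), ⟪h (p i), f - u n⟫ = 0 := by
    intro n i
    rw [inner_sub_right, sub_eq_zero]
    symm
    have hBA : (A n)⁻¹ * A n = 1 :=
      Matrix.nonsing_inv_mul _ ((Matrix.isUnit_iff_isUnit_det _).1 (hpos n).isUnit)
    have herm := (hpos n).isHermitian
    calc ⟪h (p i), u n⟫
        = ∑ j : Fin n, ⟪h (p j), f⟫ * (starRingEnd ℂ) (((A n)⁻¹ * A n) j i) := by
          simp only [hu, inner_sum, inner_smul_right]
          refine Finset.sum_congr rfl fun j _ => ?_
          rw [Matrix.mul_apply, map_sum, Finset.mul_sum]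
          refine Finset.sum_congr rfl fun k _ => ?_
          have h1 : ⟪h (p i), h (p k)⟫ = (starRingEnd ℂ) (A n k i) := by
            rw [← herm.apply k i, hA]
            simp
          rw [h1, map_mul, mul_assoc]
      _ = ⟪h (p i), f⟫ := by
          rw [hBA]
          simp [Matrix.one_apply, eq_comm (a := i)]
  -- `f - u n` is orthogonal to every element of `V n`.
  have keyV : ∀ n, ∀ w ∈ V n, ⟪w, f - u n⟫ = 0 := by
    intro n w hw
    induction hw using Submodule.span_induction with
    | mem x hx => obtain ⟨i, rfl⟩ := hx; exact key n i
    | zero => simp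
    | add x y _ _ hx hy => rw [inner_add_left, hx, hy, add_zero]
    | smul c x _ hx => rw [inner_smul_left, hx, mul_zero]
  -- `u n ∈ V n`.
  have huV : ∀ n, u n ∈ V n := by
    intro n
    refine Submodule.sum_mem _ fun j _ => Submodule.sum_mem _ fun k _ => ?_
    exact Submodule.smul_mem _ _ (Submodule.subset_span ⟨k, rfl⟩)
  -- `V n ≤ S`.
  have hVS : ∀ n, V n ≤ S := by
    intro n
    refine Submodule.span_le.2 ?_
    rintro x ⟨i, rfl⟩
    exact W.le_topologicalClosure (Submodule.subset_span ⟨p i, rfl⟩)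
  -- the closure of the span over the sequence equals `S` (uniqueness set).
  have hUclos : (Submodule.span ℂ (Set.range fun j : ℕ => h (p j))).topologicalClosure = S := by
    have h1 : (Submodule.span ℂ (Set.range fun j : ℕ => h (p j)))ᗮ = Wᗮ := by
      apply le_antisymm
      · intro g hg
        rw [Submodule.mem_orthogonal] at hg ⊢
        have hg' : ∀ j : ℕ, ⟪h (p j), g⟫ = 0 :=
          fun j => hg _ (Submodule.subset_span ⟨j, rfl⟩)
        intro w hw
        induction hw using Submodule.span_induction with
        | mem x hx => obtain ⟨q, rfl⟩ := hx; exact huniq g hg' q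
        | zero => simp
        | add x y _ _ hx hy => rw [inner_add_left, hx, hy, add_zero]
        | smul c x _ hx => rw [inner_smul_left, hx, mul_zero]
      · exact Submodule.orthogonal_le (Submodule.span_mono (by rintro x ⟨j, rfl⟩; exact ⟨p j, rfl⟩))
    rw [← Submodule.orthogonal_orthogonal_eq_closure, h1,
      Submodule.orthogonal_orthogonal_eq_closure]
  -- monotonicity of `V`.
  have hVmono : Monotone V := by
    intro m n hmn
    refine Submodule.span_le.2 ?_
    rintro x ⟨i, rfl⟩
    exact Submodule.subset_span ⟨Fin.castLE hmn i, rfl⟩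
  -- members of the span over the sequence lie in some `V N`.
  have hUsup : ∀ v ∈ Submodule.span ℂ (Set.range fun j : ℕ => h (p j)), ∃ N, v ∈ V N := by
    intro v hv
    have hle : Submodule.span ℂ (Set.range fun j : ℕ => h (p j)) ≤ ⨆ n, V n := by
      refine Submodule.span_le.2 ?_
      rintro x ⟨j, rfl⟩
      exact Submodule.mem_iSup_of_mem (j + 1)
        (Submodule.subset_span ⟨⟨j, Nat.lt_succ_self j⟩, rfl⟩)
    exact (Submodule.mem_iSup_of_directed V hVmono.directed_le).1 (hle hv)
  -- main estimate and convergence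
  rw [Metric.tendsto_atTop]
  intro ε hε
  have hfstarU : fstar ∈ closure
      ((Submodule.span ℂ (Set.range fun j : ℕ => h (p j)) : Submodule ℂ H) : Set H) := by
    have : fstar ∈ (Submodule.span ℂ (Set.range fun j : ℕ => h (p j))).topologicalClosure := by
      rw [hUclos]; exact hmem
    exact this
  obtain ⟨v, hvU, hdv⟩ := Metric.mem_closure_iff.1 hfstarU ε hε
  obtain ⟨N, hvN⟩ := hUsup v hvU
  refine ⟨N, fun n hn => ?_⟩
  have hvVn : v ∈ V n := hVmono hn hvN
  -- orthogonality facts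
  have hfS : f - fstar ∈ Sᗮ := by
    rw [Submodule.mem_orthogonal]; exact horth
  have hunS : u n ∈ S := hVS n (huV n)
  have hvS : v ∈ S := hVS n hvVn
  have a1 : ⟪fstar - u n, f - fstar⟫ = 0 := horth _ (S.sub_mem hmem hunS)
  have a2 : ⟪fstar - v, f - fstar⟫ = 0 := horth _ (S.sub_mem hmem hvS)
  have b1 : ⟪u n - v, f - u n⟫ = 0 := keyV n _ ((V n).sub_mem (huV n) hvVn)
  -- Pythagoras
  have P1 : ‖f - u n‖ ^ 2 = ‖f - fstar‖ ^ 2 + ‖fstar - u n‖ ^ 2 := by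
    have : f - u n = (f - fstar) + (fstar - u n) := by abel
    rw [this, @norm_add_sq ℂ, inner_eq_zero_symm.2 a1]
    simp
  have P2 : ‖f - v‖ ^ 2 = ‖f - fstar‖ ^ 2 + ‖fstar - v‖ ^ 2 := by
    have : f - v = (f - fstar) + (fstar - v) := by abel
    rw [this, @norm_add_sq ℂ, inner_eq_zero_symm.2 a2]
    simp
  have P3 : ‖f - v‖ ^ 2 = ‖f - u n‖ ^ 2 + ‖u n - v‖ ^ 2 := by
    have : f - v = (f - u n) + (u n - v) := by abel
    rw [this, @norm_add_sq ℂ, inner_eq_zero_symm.2 b1]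
    simp
  have hle2 : ‖fstar - u n‖ ^ 2 ≤ ‖fstar - v‖ ^ 2 := by
    nlinarith [sq_nonneg ‖u n - v‖]
  have hle : ‖fstar - u n‖ ≤ ‖fstar - v‖ := by
    nlinarith [norm_nonneg (fstar - u n), norm_nonneg (fstar - v)]
  calc dist (u n) fstar = ‖fstar - u n‖ := by rw [dist_eq_norm, norm_sub_rev]
    _ ≤ ‖fstar - v‖ := hle
    _ = dist fstar v := (dist_eq_norm _ _).symm
    _ < ε := hdv
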